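/- arXiv:1307.4897 — 5 statements merged into one kernel-verified Lean document; each statement's English description precedes it below -/
import Mathlib

section
/- A finite simple undirected graph is a union of edge-disjoint cycles (i.e., its edge set can be partitioned into edge sets of simple cycles) if and only if every vertex has even degree. -/
open SimpleGraph

private theorem veblen_odd_reach {V : Type*} [Fintype V] [DecidableEq V] (G : SimpleGraph V)
    [DecidableRel G.Adj] (v : V) (h : Odd (G.degree v)) :
    ∃ w ≠ v, G.Reachable v w ∧ Odd (G.degree w) := by
  classical
  set C : Set V := {x | G.Reachable v x} with hC
  have hclosed : ∀ ⦃x y : V⦄, x ∈ C → G.Adj x y → y ∈ C :=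
    fun x y hx hxy => hx.trans hxy.reachable
  letI : DecidablePred (· ∈ C) := Classical.decPred _
  set H := G.induce C with hH
  have hdeg : ∀ x : C, H.degree x = G.degree x.val := by
    intro x
    rw [← card_neighborSet_eq_degree, ← card_neighborSet_eq_degree]
    apply Fintype.card_congr
    exact {
      toFun := fun y => ⟨y.1.1, y.2⟩
      invFun := fun y => ⟨⟨y.1, hclosed x.2 y.2⟩, y.2⟩
      left_inv := fun y => by ext; rfl
      right_inv := fun y => by ext; rfl }
  have heven := H.even_card_odd_degree_vertices
  have hvmem : (⟨v, Reachable.refl v⟩ : C) ∈ Finset.univ.filter (fun x : C => Odd (H.degree x)) := by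
    simp [hdeg, h]
  have h1 : 1 < (Finset.univ.filter (fun x : C => Odd (H.degree x))).card := by
    rcases heven with ⟨k, hk⟩
    have : 0 < (Finset.univ.filter (fun x : C => Odd (H.degree x))).card :=
      Finset.card_pos.mpr ⟨_, hvmem⟩
    omega
  obtain ⟨w, hw, hwne⟩ := Finset.exists_mem_ne h1 ⟨v, Reachable.refl v⟩
  simp only [Finset.mem_filter] at hw
  refine ⟨w.1, ?_, w.2, by rw [← hdeg]; exact hw.2⟩
  intro hwv
  exact hwne (Subtype.ext hwv)

private theorem veblen_exists_cycle_of_even {V : Type*} [Fintype V] [DecidableEq V] (G : SimpleGraph V)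
    [DecidableRel G.Adj] (heven : ∀ v, Even (G.degree v)) {a b : V} (hab : G.Adj a b) :
    ∃ (u : V) (p : G.Walk u u), p.IsCycle := by
  classical
  set G' := G.deleteEdges {s(a, b)} with hG'
  have hne : a ≠ b := hab.ne
  have hdega : G'.degree a = G.degree a - 1 := by
    have h2 : G'.neighborFinset a = (G.neighborFinset a).erase b := by
      ext y
      simp only [mem_neighborFinset, Finset.mem_erase, hG', deleteEdges_adj,
        Set.mem_singleton_iff, Sym2.eq_iff]
      constructor
      · rintro ⟨hadj, hne2⟩
        exact ⟨fun hyb => hne2 (Or.inl ⟨trivial, hyb⟩), hadj⟩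
      · rintro ⟨hyb, hadj⟩
        exact ⟨hadj, by rintro (⟨-, rfl⟩ | ⟨rfl, rfl⟩); exacts [hyb rfl, hne rfl]⟩
    rw [degree, h2, Finset.card_erase_of_mem (by simpa using hab), degree]
  have hdegother : ∀ x, x ≠ a → x ≠ b → G'.degree x = G.degree x := by
    intro x hxa hxb
    have h2 : G'.neighborFinset x = G.neighborFinset x := by
      ext y
      simp only [mem_neighborFinset, hG', deleteEdges_adj, Set.mem_singleton_iff, Sym2.eq_iff]
      constructor
      · exact fun h => h.1
      · intro h
        exact ⟨h, by rintro (⟨rfl, rfl⟩ | ⟨rfl, rfl⟩); exacts [hxa rfl, hxb rfl]⟩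
    rw [degree, h2, degree]
  have hodda : Odd (G'.degree a) := by
    rw [hdega]
    have h1 : 1 ≤ G.degree a := by
      rw [Nat.one_le_iff_ne_zero, ← Nat.pos_iff_ne_zero]
      exact (G.degree_pos_iff_exists_adj a).mpr ⟨b, hab⟩
    obtain ⟨k, hk⟩ := heven a
    rw [hk]; exact ⟨k - 1, by omega⟩
  obtain ⟨w, hwa, hreach, hodd⟩ := veblen_odd_reach G' a hodda
  have hwb : w = b := by
    by_contra hwb
    rw [hdegother w hwa hwb] at hodd
    exact (Nat.not_odd_iff_even.mpr (heven w)) hodd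
  subst hwb
  obtain ⟨u, p, hp, -⟩ := (adj_and_reachable_delete_edges_iff_exists_cycle).mp ⟨hab, hreach⟩
  exact ⟨u, p, hp⟩

private theorem veblen_countP_card {V : Type*} [Fintype V] [DecidableEq V] {G : SimpleGraph V}
    [DecidableRel G.Adj] {u : V} (p : G.Walk u u) (ht : p.IsTrail) (x : V) :
    ((G.neighborFinset x).filter (fun y => s(x,y) ∈ p.edges)).card
      = p.edges.countP (fun e => x ∈ e) := by
  classical
  have h1 : ((G.neighborFinset x).filter (fun y => s(x,y) ∈ p.edges)).card
      = (ht.edgesFinset.filter (fun e => x ∈ e)).card := by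
    apply Finset.card_bij (fun y _ => s(x,y))
    · intro y hy
      simp only [Finset.mem_filter, mem_neighborFinset] at hy
      simp [hy.2]; exact hy.2
    · intro y₁ h₁ y₂ h₂ he
      exact Sym2.congr_right.mp he
    · intro e he
      simp only [Finset.mem_filter, Finset.mem_mk, Multiset.mem_coe] at he
      obtain ⟨y, rfl⟩ := Sym2.mem_iff_exists.mp he.2
      have hadj : G.Adj x y := (mem_edgeSet G).mp (p.edges_subset_edgeSet he.1)
      exact ⟨y, by simp [hadj, he.1]; exact he.1, rfl⟩
  rw [h1]
  simp [Finset.filter, Finset.card, Multiset.countP_eq_card_filter, List.countP_eq_length_filter]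

private theorem veblen_decomp {V : Type*} [Fintype V] [DecidableEq V] :
    ∀ (n : ℕ) (G : SimpleGraph V) (_ : DecidableRel G.Adj), G.edgeFinset.card ≤ n →
      (∀ v, Even (G.degree v)) →
      ∃ (k : ℕ) (v : Fin k → V) (c : ∀ i, G.Walk (v i) (v i)),
        (∀ i, (c i).IsCycle) ∧
        (∀ i j, i ≠ j → ∀ e, e ∈ (c i).edges → e ∉ (c j).edges) ∧
        (∀ e, e ∈ G.edgeSet ↔ ∃ i, e ∈ (c i).edges) := by
  intro n
  induction n with
  | zero =>
    intro G _ hcard _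
    refine ⟨0, Fin.elim0, fun i => i.elim0, fun i => i.elim0, fun i => i.elim0, fun e => ?_⟩
    have : G.edgeFinset = ∅ := Finset.card_eq_zero.mp (Nat.le_zero.mp hcard)
    constructor
    · intro he
      exact absurd ((mem_edgeFinset).mpr he) (by simp [this])
    · rintro ⟨i, -⟩; exact i.elim0
  | succ n ih =>
    intro G _ hcard heven
    by_cases h0 : G.edgeFinset.card = 0
    · refine ⟨0, Fin.elim0, fun i => i.elim0, fun i => i.elim0, fun i => i.elim0, fun e => ?_⟩
      have : G.edgeFinset = ∅ := Finset.card_eq_zero.mp h0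
      constructor
      · intro he
        exact absurd ((mem_edgeFinset).mpr he) (by simp [this])
      · rintro ⟨i, -⟩; exact i.elim0
    · obtain ⟨e₀, he₀⟩ := Finset.card_pos.mp (Nat.pos_of_ne_zero h0)
      rw [mem_edgeFinset] at he₀
      obtain ⟨a, b⟩ := e₀
      have hab : G.Adj a b := (mem_edgeSet G).mp he₀
      obtain ⟨u, p, hp⟩ := veblen_exists_cycle_of_even G heven hab
      classical
      set G'' := G.deleteEdges {e | e ∈ p.edges} with hG''
      have hle : G'' ≤ G := deleteEdges_le _
      have hES : G''.edgeSet = G.edgeSet \ {e | e ∈ p.edges} := edgeSet_deleteEdges _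
      -- even degrees persist
      have heven'' : ∀ v, Even (G''.degree v) := by
        intro x
        have hnb : G''.neighborFinset x
            = (G.neighborFinset x).filter (fun y => ¬ s(x,y) ∈ p.edges) := by
          ext y
          simp [hG'', mem_neighborFinset, deleteEdges_adj, Finset.mem_filter, and_comm]
        have hsplit := Finset.card_filter_add_card_filter_not
          (s := G.neighborFinset x) (p := fun y => s(x,y) ∈ p.edges)
        have hcnt : Even (((G.neighborFinset x).filter (fun y => s(x,y) ∈ p.edges)).card) := by
          rw [veblen_countP_card p hp.isTrail x]
          exact (hp.isTrail.even_countP_edges_iff x).mpr (by simp)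
        have hx := heven x
        rw [degree, hnb]
        rw [degree] at hx
        rcases hcnt with ⟨m, hm⟩
        rcases hx with ⟨M, hM⟩
        refine ⟨M - m, ?_⟩
        omega
      -- fewer edges
      have hlt : G''.edgeFinset.card < G.edgeFinset.card := by
        apply Finset.card_lt_card
        constructor
        · exact edgeFinset_mono hle
        · intro hsub
          have hne : p.edges ≠ [] := by
            have h3 := hp.three_le_length
            intro hnil
            have := p.length_edges
            rw [hnil] at this
            simp at this
            omega
          obtain ⟨f, hf⟩ := List.exists_mem_of_ne_nil _ hne
          have hfG : f ∈ G.edgeFinset := mem_edgeFinset.mpr (p.edges_subset_edgeSet hf)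
          have := hsub hfG
          rw [mem_edgeFinset, hES] at this
          exact this.2 hf
      obtain ⟨k, v, c, hcyc, hdisj, hcov⟩ :=
        ih G'' inferInstance (by omega) heven''
      set f : Fin (k + 1) → Σ w : V, G.Walk w w :=
        Fin.cons ⟨u, p⟩ (fun j => ⟨v j, (c j).transfer G
          (fun e he => edgeSet_mono hle ((c j).edges_subset_edgeSet he))⟩) with hf
      have hf0 : f 0 = ⟨u, p⟩ := Fin.cons_zero _ _
      have hfs : ∀ j, f j.succ = ⟨v j, (c j).transfer G
          (fun e he => edgeSet_mono hle ((c j).edges_subset_edgeSet he))⟩ :=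
        fun j => Fin.cons_succ _ _ _
      have hE0 : (f 0).snd.edges = p.edges := by rw [hf0]
      have hEs : ∀ j, (f j.succ).snd.edges = (c j).edges := by
        intro j; rw [hfs j]; exact Walk.edges_transfer _ _
      have hC : ∀ i, (f i).snd.IsCycle := by
        intro i
        induction i using Fin.cases with
        | zero => rw [hf0]; exact hp
        | succ j => rw [hfs j]; exact (hcyc j).transfer _
      refine ⟨k + 1, fun i => (f i).1, fun i => (f i).2, ?_, ?_, ?_⟩
      · exact hC
      · intro i j hij e hei hej
        induction i using Fin.cases with
        | zero =>
          induction j using Fin.cases with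
          | zero => exact hij rfl
          | succ j' =>
            simp only [hE0] at hei
            simp only [hEs] at hej
            have := (c j').edges_subset_edgeSet hej
            rw [hES] at this
            exact this.2 hei
        | succ i' =>
          induction j using Fin.cases with
          | zero =>
            simp only [hEs] at hei
            simp only [hE0] at hej
            have := (c i').edges_subset_edgeSet hei
            rw [hES] at this
            exact this.2 hej
          | succ j' =>
            simp only [hEs] at hei hej
            exact hdisj i' j' (fun h => hij (by rw [h])) e hei hej
      · intro e
        rw [Fin.exists_fin_succ]
        simp only [hE0, hEs]
        constructor
        · intro he
          by_cases hpe : e ∈ p.edges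
          · exact Or.inl hpe
          · exact Or.inr ((hcov e).mp (by rw [hES]; exact ⟨he, hpe⟩))
        · rintro (he | ⟨i, he⟩)
          · exact p.edges_subset_edgeSet he
          · exact edgeSet_mono hle ((hcov e).mpr ⟨i, he⟩)

private theorem veblen_forward {V : Type*} [Fintype V] [DecidableEq V] (G : SimpleGraph V)
    (k : ℕ) (v : Fin k → V) (c : ∀ i, G.Walk (v i) (v i))
    (hcyc : ∀ i, (c i).IsCycle)
    (hdisj : ∀ i j, i ≠ j → ∀ e, e ∈ (c i).edges → e ∉ (c j).edges)
    (hcov : ∀ e, e ∈ G.edgeSet ↔ ∃ i, e ∈ (c i).edges) (x : V) :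
    Even ((G.neighborSet x).ncard) := by
  classical
  have hncard : (G.neighborSet x).ncard = G.degree x := by
    rw [Set.ncard_eq_toFinset_card', ← neighborFinset_def, degree]
  rw [hncard, ← card_incidenceFinset_eq_degree]
  have hinc : G.incidenceFinset x
      = Finset.univ.biUnion
        (fun i => ((hcyc i).isTrail.edgesFinset).filter (fun e => x ∈ e)) := by
    ext e
    rw [mem_incidenceFinset]
    simp only [Finset.mem_biUnion, Finset.mem_univ, Finset.mem_filter, true_and,
      Finset.mem_mk, Multiset.mem_coe]
    constructor
    · rintro ⟨he, hx⟩
      obtain ⟨i, hi⟩ := (hcov e).mp he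
      exact ⟨i, hi, hx⟩
    · rintro ⟨i, hi, hx⟩
      exact ⟨(hcov e).mpr ⟨i, hi⟩, hx⟩
  rw [hinc, Finset.card_biUnion]
  · apply Finset.even_sum
    intro i _
    have hcount : (((hcyc i).isTrail.edgesFinset).filter (fun e => x ∈ e)).card
        = (c i).edges.countP (fun e => x ∈ e) := by
      simp [Finset.filter, Finset.card, Multiset.countP_eq_card_filter,
        List.countP_eq_length_filter]
    rw [hcount]
    exact ((hcyc i).isTrail.even_countP_edges_iff x).mpr (by simp)
  · intro i _ j _ hij
    rw [Function.onFun, Finset.disjoint_left]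
    intro e hei hej
    simp only [Finset.mem_filter, Finset.mem_mk, Multiset.mem_coe] at hei hej
    exact hdisj i j hij e hei.1 hej.1

/-- Veblen's theorem: a finite simple graph is an edge-disjoint union of simple
cycles (its edge set is partitioned into the edge sets of finitely many simple
cycles) if and only if every vertex has even degree. -/
theorem stmt1 {V : Type*} [Fintype V] [DecidableEq V] (G : SimpleGraph V) :
    (∃ (k : ℕ) (v : Fin k → V) (c : ∀ i, G.Walk (v i) (v i)),
        (∀ i, (c i).IsCycle) ∧
        (∀ i j, i ≠ j → ∀ e, e ∈ (c i).edges → e ∉ (c j).edges) ∧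
        (∀ e, e ∈ G.edgeSet ↔ ∃ i, e ∈ (c i).edges)) ↔
      ∀ v, Even ((G.neighborSet v).ncard) := by
  classical
  constructor
  · rintro ⟨k, v, c, hcyc, hdisj, hcov⟩ x
    exact veblen_forward G k v c hcyc hdisj hcov x
  · intro heven
    have heven' : ∀ x, Even (G.degree x) := by
      intro x
      have hncard : (G.neighborSet x).ncard = G.degree x := by
        rw [Set.ncard_eq_toFinset_card', ← neighborFinset_def, degree]
      rw [← hncard]
      exact heven x
    exact veblen_decomp G.edgeFinset.card G (Classical.decRel _) le_rfl heven'
end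

section
/- If G is an undirected graph with every vertex of even degree and {s,t} is an edge of G, then removing the edge {s,t} leaves s and t in the same connected component. -/
/-- If every vertex of `G` has even degree and `{s,t}` is an edge of `G`, then
deleting the edge `{s,t}` leaves `s` and `t` in the same connected component. -/
theorem stmt2 {V : Type*} [Fintype V] (G : SimpleGraph V) (s t : V)
    (heven : ∀ v, Even ((G.neighborSet v).ncard)) (hst : G.Adj s t) :
    (G.deleteEdges {s(s, t)}).Reachable s t := by
  classical
  by_contra hreach
  set G' := G.deleteEdges {s(s, t)} with hG'
  have hG'adj : ∀ a b, G'.Adj a b ↔ G.Adj a b ∧ ¬(a = s ∧ b = t) ∧ ¬(a = t ∧ b = s) := by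
    intro a b
    rw [hG', SimpleGraph.deleteEdges_adj]
    simp [Sym2.eq_iff, and_assoc, not_or]
  have hevenG : ∀ v, Even (G.degree v) := by
    intro v
    have := heven v
    rwa [Set.ncard_eq_toFinset_card', ← SimpleGraph.neighborFinset_def] at this
  let S : Set V := {v | G'.Reachable s v}
  have hsS : s ∈ S := SimpleGraph.Reachable.refl s
  have htS : t ∉ S := hreach
  have hclosed : ∀ {a b : V}, G'.Adj a b → a ∈ S → b ∈ S := by
    intro a b hab ha
    exact ha.trans hab.reachable
  let H : SimpleGraph V :=
    { Adj := fun a b => G'.Adj a b ∧ a ∈ S ∧ b ∈ S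
      symm := by
        refine ⟨?_⟩
        rintro a b ⟨h, ha, hb⟩
        exact ⟨h.symm, hb, ha⟩
      loopless := ⟨fun a h => G'.loopless.irrefl a h.1⟩ }
  have hHdeg : ∀ v, H.degree v = if v ∈ S then G'.degree v else 0 := by
    intro v
    by_cases hv : v ∈ S
    · simp only [hv, if_pos]
      unfold H
      unfold SimpleGraph.degree
      congr 1
      ext w
      simp only [SimpleGraph.mem_neighborFinset]
      constructor
      · rintro ⟨h, _, _⟩; exact h
      · intro h; exact ⟨h, hv, hclosed h hv⟩
    · simp only [hv, if_neg, if_false]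
      rw [SimpleGraph.degree, Finset.card_eq_zero, Finset.eq_empty_iff_forall_notMem]
      intro w hw
      rw [SimpleGraph.mem_neighborFinset] at hw
      exact hv hw.2.1
  -- total parity from handshake
  have htotal : Even (∑ v, H.degree v) := by
    rw [show (∑ v, H.degree v) = 2 * H.edgeFinset.card by
      convert SimpleGraph.sum_degrees_eq_twice_card_edges H]
    exact even_two_mul _
  have hsum : (∑ v, H.degree v) = ∑ v ∈ S.toFinset, G'.degree v := by
    rw [← Finset.sum_filter_add_sum_filter_not Finset.univ (· ∈ S)]
    have h1 : ∑ v ∈ Finset.univ.filter (· ∈ S), H.degree v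
        = ∑ v ∈ S.toFinset, G'.degree v := by
      apply Finset.sum_congr
      · ext v; simp
      · intro v hv
        rw [Set.mem_toFinset] at hv
        rw [hHdeg, if_pos hv]
    have h2 : ∑ v ∈ Finset.univ.filter (¬ · ∈ S), H.degree v = 0 := by
      apply Finset.sum_eq_zero
      intro v hv
      simp only [Finset.mem_filter] at hv
      rw [hHdeg, if_neg hv.2]
    rw [h1, h2, add_zero]
  -- degree of s in G'
  have hnbrs : G'.neighborFinset s = (G.neighborFinset s).erase t := by
    ext w
    simp only [SimpleGraph.mem_neighborFinset, Finset.mem_erase, hG'adj]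
    constructor
    · rintro ⟨h, h1, h2⟩
      exact ⟨fun hwt => h1 ⟨trivial, hwt⟩, h⟩
    · rintro ⟨hw, h⟩
      exact ⟨h, fun hh => hw hh.2, fun hh => hst.ne hh.1⟩
  have hdegs : G'.degree s = G.degree s - 1 := by
    unfold SimpleGraph.degree
    rw [hnbrs, Finset.card_erase_of_mem (by rwa [SimpleGraph.mem_neighborFinset])]
  have hdegs_odd : Odd (G'.degree s) := by
    rw [hdegs]
    have hpos : 0 < G.degree s := by
      rw [SimpleGraph.degree_pos_iff_exists_adj]
      exact ⟨t, hst⟩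
    exact Nat.Even.sub_odd hpos (hevenG s) odd_one
  -- degrees of other vertices in S are even
  have hother : ∀ v ∈ S.toFinset.erase s, Even (G'.degree v) := by
    intro v hv
    rw [Finset.mem_erase, Set.mem_toFinset] at hv
    obtain ⟨hvs, hvS⟩ := hv
    have hvt : v ≠ t := fun h => htS (h ▸ hvS)
    have : G'.neighborFinset v = G.neighborFinset v := by
      ext w
      simp only [SimpleGraph.mem_neighborFinset, hG'adj]
      constructor
      · rintro ⟨h, _, _⟩; exact h
      · intro h
        exact ⟨h, fun hh => hvs hh.1, fun hh => hvt hh.1⟩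
    unfold SimpleGraph.degree
    rw [this]
    exact hevenG v
  -- contradiction
  have hS : ∑ v ∈ S.toFinset, G'.degree v
      = G'.degree s + ∑ v ∈ S.toFinset.erase s, G'.degree v := by
    exact (Finset.add_sum_erase _ _ (Set.mem_toFinset.mpr hsS)).symm
  rw [hsum, hS] at htotal
  have heven' : Even (∑ v ∈ S.toFinset.erase s, G'.degree v) :=
    Finset.even_sum _ hother
  rw [Nat.even_add] at htotal
  have := htotal.mpr heven'
  exact (Nat.not_even_iff_odd.mpr hdegs_odd) this
end

section
/- For vertex set {1,...,n}, let T be the set of triangles with edge-length patterns (i,i,2i) or (i,i+1,2i+1). Every graph on {1,...,n} in which every vertex has even degree is the mod-2 sum (symmetric difference of edge sets) of a subfamily of T. -/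
/-- Triangles of the family `T` (length patterns `(i,i,2i)` or `(i,i+1,2i+1)`). -/
def InT (n a b c : ℕ) : Prop :=
  1 ≤ a ∧ a < b ∧ b < c ∧ c ≤ n ∧
    ∃ i, 1 ≤ i ∧
      ((b - a = i ∧ c - b = i) ∨ (b - a = i ∧ c - b = i + 1) ∨
        (b - a = i + 1 ∧ c - b = i))


open Finset
open scoped symmDiff

/-- predicate: ordered pair (x,y) is an edge of triangle T -/
def triPred (x y : ℕ) (T : ℕ × ℕ × ℕ) : Prop :=
  (x, y) = (T.1, T.2.1) ∨ (x, y) = (T.2.1, T.2.2) ∨ (x, y) = (T.1, T.2.2)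

instance (x y : ℕ) : DecidablePred (triPred x y) := fun _ => by
  unfold triPred; infer_instance

/-- mod-2 count of triangles in S containing edge (x,y) -/
def cnt (S : Finset (ℕ × ℕ × ℕ)) (x y : ℕ) : ZMod 2 :=
  ((S.filter (triPred x y)).card : ZMod 2)

lemma cnt_symmDiff (A B : Finset (ℕ × ℕ × ℕ)) (x y : ℕ) :
    cnt (A ∆ B) x y = cnt A x y + cnt B x y := by
  classical
  unfold cnt
  have hfilt : (A ∆ B).filter (triPred x y) = (A.filter (triPred x y)) ∆ (B.filter (triPred x y)) := by
    ext t
    simp [Finset.mem_symmDiff, Finset.mem_filter]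
    tauto
  rw [hfilt]
  set a := A.filter (triPred x y)
  set b := B.filter (triPred x y)
  have h1 : (a ∆ b).card + 2 * (a ∩ b).card = a.card + b.card := by
    have hd : Disjoint (a \ b) (b \ a) := disjoint_sdiff_sdiff
    have : (a ∆ b).card = (a \ b).card + (b \ a).card := by
      rw [symmDiff_def]; exact Finset.card_union_of_disjoint hd
    have h2 := Finset.card_sdiff_add_card_inter a b
    have h3 := Finset.card_sdiff_add_card_inter b a
    rw [Finset.inter_comm b a] at h3
    omega
  have := congrArg (fun m : ℕ => (m : ZMod 2)) h1
  push_cast at this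
  have h2 : ((2 : ZMod 2)) = 0 := by decide
  rw [h2] at this
  simpa using this

def seg (a b : ℕ) : Finset (ℕ × ℕ × ℕ) :=
  if h : b ≤ a + 1 then ∅
  else ({(a, (a + b) / 2, b)} : Finset (ℕ × ℕ × ℕ)) ∆ (seg a ((a + b) / 2) ∆ seg ((a + b) / 2) b)
termination_by b - a
decreasing_by all_goals omega

def pathInd (a b x y : ℕ) : ZMod 2 := if a ≤ x ∧ y = x + 1 ∧ y ≤ b then 1 else 0
def chordInd (a b x y : ℕ) : ZMod 2 := if x = a ∧ y = b then 1 else 0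

theorem cnt_seg (a b : ℕ) (hab : a < b) (x y : ℕ) :
    cnt (seg a b) x y = pathInd a b x y + chordInd a b x y := by
  rw [seg]
  split_ifs with h
  · simp only [cnt, pathInd, chordInd, Finset.filter_empty, Finset.card_empty, Nat.cast_zero]
    split_ifs <;> first | decide | (exfalso; omega)
  · have hm1 : a < (a + b) / 2 := by omega
    have hm2 : (a + b) / 2 < b := by omega
    rw [cnt_symmDiff, cnt_symmDiff, cnt_seg a ((a + b) / 2) hm1 x y,
      cnt_seg ((a + b) / 2) b hm2 x y]
    have hsing : cnt {(a, (a + b) / 2, b)} x y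
        = if triPred x y (a, (a + b) / 2, b) then 1 else 0 := by
      simp only [cnt, Finset.filter_singleton]
      split_ifs <;> simp
    rw [hsing]
    set m := (a + b) / 2 with hm
    simp only [triPred, pathInd, chordInd, Prod.mk.injEq]
    split_ifs <;> first | decide | (exfalso; omega)
termination_by b - a

theorem seg_mem (n a b : ℕ) (ha : 1 ≤ a) (hb : b ≤ n) :
    ∀ t ∈ seg a b, InT n t.1 t.2.1 t.2.2 := by
  intro t ht
  rw [seg] at ht
  split_ifs at ht with h
  · simp at ht
  · rw [Finset.mem_symmDiff] at ht
    have ht' : t ∈ ({(a, (a + b) / 2, b)} : Finset (ℕ × ℕ × ℕ))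
        ∨ t ∈ seg a ((a + b) / 2) ∨ t ∈ seg ((a + b) / 2) b := by
      rcases ht with ⟨h1, _⟩ | ⟨h1, _⟩
      · exact Or.inl h1
      · rw [Finset.mem_symmDiff] at h1; tauto
    rcases ht' with h1 | h1 | h1
    · simp only [Finset.mem_singleton] at h1
      subst h1
      show InT n a ((a + b) / 2) b
      refine ⟨ha, by omega, by omega, hb, (a + b) / 2 - a, by omega, by omega⟩
    · exact seg_mem n a ((a + b) / 2) ha (by omega) t h1
    · exact seg_mem n ((a + b) / 2) b (by omega) hb t h1
termination_by b - a

instance : Std.Commutative (α := Finset (ℕ × ℕ × ℕ)) (· ∆ ·) := ⟨symmDiff_comm⟩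
instance : Std.Associative (α := Finset (ℕ × ℕ × ℕ)) (· ∆ ·) := ⟨symmDiff_assoc⟩

def bigSym (f : ℕ × ℕ → Finset (ℕ × ℕ × ℕ)) (E : Finset (ℕ × ℕ)) : Finset (ℕ × ℕ × ℕ) :=
  E.fold (· ∆ ·) ∅ f

theorem mem_bigSym {f : ℕ × ℕ → Finset (ℕ × ℕ × ℕ)} {E : Finset (ℕ × ℕ)} {t : ℕ × ℕ × ℕ}
    (ht : t ∈ bigSym f E) : ∃ e ∈ E, t ∈ f e := by
  classical
  induction E using Finset.induction_on with
  | empty => simp [bigSym] at ht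
  | insert _ _ hnot ih =>
    rename_i e E'
    rw [bigSym, Finset.fold_insert hnot, Finset.mem_symmDiff] at ht
    rcases ht with ⟨h1, _⟩ | ⟨h1, _⟩
    · exact ⟨e, by simp, h1⟩
    · obtain ⟨e', he', h2⟩ := ih h1
      exact ⟨e', by simp [he'], h2⟩

theorem cnt_bigSym (f : ℕ × ℕ → Finset (ℕ × ℕ × ℕ)) (E : Finset (ℕ × ℕ)) (x y : ℕ) :
    cnt (bigSym f E) x y = ∑ e ∈ E, cnt (f e) x y := by
  classical
  induction E using Finset.induction_on with
  | empty => simp [bigSym, cnt]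
  | insert _ _ hnot ih =>
    rename_i e E'
    rw [bigSym, Finset.fold_insert hnot]
    rw [cnt_symmDiff, Finset.sum_insert hnot, ← ih]
    rfl

lemma odd_iff_cast (m : ℕ) : Odd m ↔ (m : ZMod 2) = 1 := by
  rw [Nat.odd_iff, ← ZMod.natCast_mod m 2]
  rcases Nat.mod_two_eq_zero_or_one m with h | h <;> rw [h] <;> decide

lemma sum_ind {α : Type*} (s : Finset α) (P : α → Prop) [DecidablePred P] :
    ∑ t ∈ s, (if P t then (1 : ZMod 2) else 0) = ((s.filter P).card : ZMod 2) := by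
  rw [Finset.card_filter]
  push_cast
  exact Finset.sum_congr rfl (fun t _ => by split_ifs <;> simp)

lemma even_cast {m : ℕ} (h : Even m) : (m : ZMod 2) = 0 := by
  obtain ⟨k, rfl⟩ := h
  push_cast
  exact CharTwo.add_self_eq_zero _

/-- Every graph on `{1,…,n}` in which every vertex has even degree is the mod-2
sum (symmetric difference of edge sets) of a subfamily of the triangles `T`:
an edge `{a,b}` is present iff it lies in an odd number of the chosen triangles. -/
theorem stmt5 (n : ℕ) (G : SimpleGraph ℕ)
    (hsupp : ∀ a b, G.Adj a b → 1 ≤ a ∧ a ≤ n ∧ 1 ≤ b ∧ b ≤ n)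
    (heven : ∀ v, Even ((G.neighborSet v).ncard)) :
    ∃ S : Finset (ℕ × ℕ × ℕ), (∀ T ∈ S, InT n T.1 T.2.1 T.2.2) ∧
      ∀ a b : ℕ, a < b →
        (G.Adj a b ↔ Odd (S.filter (fun T =>
          (a, b) = (T.1, T.2.1) ∨ (a, b) = (T.2.1, T.2.2) ∨
            (a, b) = (T.1, T.2.2))).card) := by
  classical
  set V : Finset ℕ := Finset.Icc 1 n with hV
  obtain ⟨E, hEmem⟩ : ∃ E : Finset (ℕ × ℕ), ∀ e : ℕ × ℕ, e ∈ E ↔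
      (1 ≤ e.1 ∧ e.1 ≤ n ∧ 1 ≤ e.2 ∧ e.2 ≤ n ∧ e.1 < e.2 ∧ G.Adj e.1 e.2) := by
    refine ⟨(V ×ˢ V).filter (fun e => e.1 < e.2 ∧ G.Adj e.1 e.2), fun e => ?_⟩
    rw [Finset.mem_filter, Finset.mem_product, hV, Finset.mem_Icc, Finset.mem_Icc]
    tauto
  refine ⟨bigSym (fun e => seg e.1 e.2) E, ?_, ?_⟩
  · intro t ht
    obtain ⟨e, he, hte⟩ := mem_bigSym ht
    obtain ⟨h1, h2, h3, h4, h5, h6⟩ := (hEmem e).1 he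
    exact seg_mem n e.1 e.2 h1 h4 t hte
  · intro a b hab
    have key : cnt (bigSym (fun e => seg e.1 e.2) E) a b = if G.Adj a b then 1 else 0 := by
      rw [cnt_bigSym]
      have h1 : ∀ e ∈ E, cnt (seg e.1 e.2) a b
          = pathInd e.1 e.2 a b + chordInd e.1 e.2 a b := by
        intro e he
        exact cnt_seg e.1 e.2 ((hEmem e).1 he).2.2.2.2.1 a b
      rw [Finset.sum_congr rfl h1, Finset.sum_add_distrib]
      have hchord : ∑ e ∈ E, chordInd e.1 e.2 a b = if G.Adj a b then 1 else 0 := by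
        have h2 : ∀ e ∈ E, chordInd e.1 e.2 a b
            = if (a, b) = e then (1 : ZMod 2) else 0 := by
          intro e _
          unfold chordInd
          exact if_congr (by simp [Prod.ext_iff]) rfl rfl
        rw [Finset.sum_congr rfl h2, Finset.sum_ite_eq E (a, b) (fun _ => (1 : ZMod 2))]
        have hmem : ((a, b) ∈ E) ↔ G.Adj a b := by
          rw [hEmem]
          constructor
          · exact fun h => h.2.2.2.2.2
          · intro h
            obtain ⟨u1, u2, u3, u4⟩ := hsupp a b h
            exact ⟨u1, u2, u3, u4, hab, h⟩
        by_cases hadj : G.Adj a b <;> simp [hmem, hadj]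
      have hpath : ∑ e ∈ E, pathInd e.1 e.2 a b = 0 := by
        by_cases hb1 : b = a + 1
        · subst hb1
          by_cases hxn : n ≤ a
          · apply Finset.sum_eq_zero
            intro e he
            obtain ⟨u1, u2, u3, u4, u5, u6⟩ := (hEmem e).1 he
            unfold pathInd
            rw [if_neg (by omega)]
          · -- cut argument
            push_neg at hxn
            set A : Finset ℕ := Finset.Icc 1 a with hA
            set B : Finset ℕ := Finset.Icc (a + 1) n with hB
            have hsub : V = A ∪ B := by
              rw [hV, hA, hB]
              ext w
              simp only [Finset.mem_Icc, Finset.mem_union]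
              omega
            have hdisj : Disjoint A B := by
              rw [hA, hB, Finset.disjoint_left]
              intro w hw hw'
              simp only [Finset.mem_Icc] at hw hw'
              omega
            have hdeg : ∀ v, ∑ w ∈ V, (if G.Adj v w then (1 : ZMod 2) else 0) = 0 := by
              intro v
              rw [sum_ind]
              apply even_cast
              have h1 : G.neighborSet v = ↑(V.filter (fun w => G.Adj v w)) := by
                ext w
                simp only [SimpleGraph.mem_neighborSet, Finset.coe_filter, Set.mem_setOf_eq,
                  hV, Finset.mem_Icc]
                constructor
                · intro h
                  obtain ⟨u1, u2, u3, u4⟩ := hsupp v w h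
                  exact ⟨⟨u3, u4⟩, h⟩
                · exact fun h => h.2
              have h2 := heven v
              rwa [h1, Set.ncard_coe_finset] at h2
            have hsum0 : ∑ v ∈ A, ∑ w ∈ V, (if G.Adj v w then (1 : ZMod 2) else 0) = 0 :=
              Finset.sum_eq_zero (fun v _ => hdeg v)
            rw [hsub] at hsum0
            rw [Finset.sum_congr rfl (fun v _ => Finset.sum_union hdisj),
              Finset.sum_add_distrib] at hsum0
            have hAA : ∑ v ∈ A, ∑ w ∈ A, (if G.Adj v w then (1 : ZMod 2) else 0) = 0 := by
              rw [← Finset.sum_product']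
              apply Finset.sum_involution (fun p _ => (p.2, p.1))
              · intro p _
                by_cases h : G.Adj p.1 p.2
                · have h' : G.Adj p.2 p.1 := h.symm
                  simp only [h, h', if_true]
                  decide
                · have h' : ¬ G.Adj p.2 p.1 := fun hh => h hh.symm
                  simp [h, h']
              · intro p _ hne heq
                have hadj : G.Adj p.1 p.2 := by
                  by_contra hc
                  simp [hc] at hne
                have : p.2 = p.1 := congrArg Prod.fst heq
                exact G.ne_of_adj hadj this.symm
              · intro p hp
                simp only [Finset.mem_product] at hp ⊢
                exact ⟨hp.2, hp.1⟩
              · intro p _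
                rfl
            rw [hAA, zero_add] at hsum0
            -- hsum0 : ∑ v ∈ A, ∑ w ∈ B, ind = 0
            have hAB : ∑ v ∈ A, ∑ w ∈ B, (if G.Adj v w then (1 : ZMod 2) else 0)
                = (((A ×ˢ B).filter (fun p : ℕ × ℕ => G.Adj p.1 p.2)).card : ZMod 2) := by
              rw [← Finset.sum_product', sum_ind]
            have hEp : ∑ e ∈ E, pathInd e.1 e.2 a (a + 1)
                = ((E.filter (fun e : ℕ × ℕ => e.1 ≤ a ∧ a + 1 = a + 1 ∧ a + 1 ≤ e.2)).card : ZMod 2) := by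
              rw [← sum_ind]
              rfl
            have hset : E.filter (fun e : ℕ × ℕ => e.1 ≤ a ∧ a + 1 = a + 1 ∧ a + 1 ≤ e.2)
                = (A ×ˢ B).filter (fun p : ℕ × ℕ => G.Adj p.1 p.2) := by
              ext e
              rw [Finset.mem_filter, Finset.mem_filter, hEmem, Finset.mem_product,
                hA, hB, Finset.mem_Icc, Finset.mem_Icc]
              constructor
              · rintro ⟨⟨u1, u2, u3, u4, u5, u6⟩, w1, _, w3⟩
                exact ⟨⟨⟨u1, w1⟩, w3, u4⟩, u6⟩
              · rintro ⟨⟨⟨v1, v2⟩, v3, v4⟩, hadj⟩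
                exact ⟨⟨v1, by omega, by omega, v4, by omega, hadj⟩, v2, rfl, v3⟩
            rw [hEp, hset, ← hAB, hsum0]
        · apply Finset.sum_eq_zero
          intro e _
          unfold pathInd
          rw [if_neg (by tauto)]
      rw [hchord, hpath, zero_add]
    have hfilter : (bigSym (fun e => seg e.1 e.2) E).filter (fun T =>
          (a, b) = (T.1, T.2.1) ∨ (a, b) = (T.2.1, T.2.2) ∨ (a, b) = (T.1, T.2.2))
        = (bigSym (fun e => seg e.1 e.2) E).filter (triPred a b) :=
      Finset.filter_congr (fun _ _ => Iff.rfl)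
    rw [odd_iff_cast, hfilter]
    have : ((((bigSym (fun e => seg e.1 e.2) E).filter (triPred a b)).card : ℕ) : ZMod 2)
        = if G.Adj a b then 1 else 0 := key
    rw [this]
    by_cases hadj : G.Adj a b <;> simp [hadj]
end

section
/- Let G be a graph on {1,...,n} with every vertex of even degree, G nonempty, and suppose G is not itself a member of T (the set of triangles with length patterns (i,i,2i) or (i,i+1,2i+1)). Let e be an edge of G of maximal length l ≥ 2. Then there exists a triangle t ∈ T containing e as its longest edge, and the graph H = G ⊕ t (symmetric difference of edge sets) has every vertex of even degree and satisfies d(H) < d(G), where d(G) = (l, m) with m the number of edges of G of length l, ordered lexicographically. -/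
private lemma even_ncard_symmDiff {A B : Set ℕ} (hA : A.Finite) (hB : B.Finite)
    (h1 : Even A.ncard) (h2 : Even B.ncard) : Even (symmDiff A B).ncard := by
  have hdef : symmDiff A B = (A \ B) ∪ (B \ A) := symmDiff_def A B
  rw [hdef, Set.ncard_union_eq disjoint_sdiff_sdiff hA.diff hB.diff]
  have e1 := Set.ncard_inter_add_ncard_diff_eq_ncard A B hA
  have e2 := Set.ncard_inter_add_ncard_diff_eq_ncard B A hB
  have : (B ∩ A) = (A ∩ B) := Set.inter_comm _ _
  rw [this] at e2
  obtain ⟨r, hr⟩ := h1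
  obtain ⟨s, hs⟩ := h2
  rw [Nat.even_iff] at *
  omega

private lemma mem_tri_iff (u b v x y : ℕ) :
    s(x, y) ∈ ({s(u, b), s(b, v), s(u, v)} : Set (Sym2 ℕ)) ↔
      (x = u ∧ y = b) ∨ (x = b ∧ y = u) ∨ (x = b ∧ y = v) ∨ (x = v ∧ y = b) ∨
      (x = u ∧ y = v) ∨ (x = v ∧ y = u) := by
  simp only [Set.mem_insert_iff, Set.mem_singleton_iff, Sym2.eq, Sym2.rel_iff',
    Prod.mk.injEq, Prod.swap_prod_mk]
  tauto

/-- Decomposition step: if `G` on `{1,…,n}` has all degrees even, is nonempty,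
is not itself a triangle of `T`, and `{u,v}` is an edge of maximal length
`l = v - u ≥ 2`, then there is a triangle `t ∈ T` with longest edge `{u,v}`
such that `H = G ⊕ t` has all degrees even and `d(H) < d(G)` lexicographically,
where `d(G) = (max edge length, number of edges of that length)`. -/
theorem stmt17 (n : ℕ) (G : SimpleGraph ℕ)
    (hsupp : ∀ a b, G.Adj a b → 1 ≤ a ∧ a ≤ n ∧ 1 ≤ b ∧ b ≤ n)
    (heven : ∀ v, Even ((G.neighborSet v).ncard))
    (hnotT : ¬ ∃ a b c, InT n a b c ∧
      ∀ x y, G.Adj x y ↔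
        s(x, y) ∈ ({s(a, b), s(b, c), s(a, c)} : Set (Sym2 ℕ)))
    (u v l : ℕ) (huv : u < v) (he : G.Adj u v) (hl : v - u = l) (hl2 : 2 ≤ l)
    (hmaxlen : ∀ a b, G.Adj a b → max a b - min a b ≤ l) :
    ∃ a b c : ℕ, InT n a b c ∧ a = u ∧ c = v ∧
      ∃ H : SimpleGraph ℕ,
        (∀ x y, H.Adj x y ↔
          Xor' (G.Adj x y)
            (s(x, y) ∈ ({s(a, b), s(b, c), s(a, c)} : Set (Sym2 ℕ)))) ∧
        (∀ w, Even ((H.neighborSet w).ncard)) ∧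
        ((∀ x y, H.Adj x y → max x y - min x y < l) ∨
          ((∀ x y, H.Adj x y → max x y - min x y ≤ l) ∧
            Set.ncard {p : ℕ × ℕ | p.1 < p.2 ∧ H.Adj p.1 p.2 ∧ p.2 - p.1 = l} <
              Set.ncard {p : ℕ × ℕ | p.1 < p.2 ∧ G.Adj p.1 p.2 ∧ p.2 - p.1 = l})) := by
  clear hnotT
  obtain ⟨hu1, hun, hv1, hvn⟩ := hsupp u v he
  set b : ℕ := u + l / 2 with hb
  have hvul : v = u + l := by omega
  have hk1 : 1 ≤ l / 2 := Nat.one_le_div_iff (by omega) |>.2 (by omega)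
  have hkl : l / 2 < l := Nat.div_lt_self (by omega) (by omega)
  have hab : u < b := by omega
  have hbc : b < v := by omega
  refine ⟨u, b, v, ⟨hu1, hab, hbc, hvn, l / 2, hk1, ?_⟩, rfl, rfl, ?_⟩
  · rcases Nat.even_or_odd l with hpar | hpar
    · left; obtain ⟨m, hm⟩ := hpar; omega
    · right; left; obtain ⟨m, hm⟩ := hpar; omega
  · set S : Set (Sym2 ℕ) := {s(u, b), s(b, v), s(u, v)} with hS
    -- membership characterization
    have hmem : ∀ x y : ℕ, s(x, y) ∈ S ↔
        (x = u ∧ y = b) ∨ (x = b ∧ y = u) ∨ (x = b ∧ y = v) ∨ (x = v ∧ y = b) ∨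
        (x = u ∧ y = v) ∨ (x = v ∧ y = u) := fun x y => mem_tri_iff u b v x y
    have hsym : Symmetric (fun x y => Xor' (G.Adj x y) (s(x, y) ∈ S)) := by
      intro x y h
      rwa [G.adj_comm, show s(x, y) = s(y, x) from Sym2.eq_swap] at h
    have hirr : Irreflexive (fun x y => Xor' (G.Adj x y) (s(x, y) ∈ S)) := by
      intro x h
      rcases h with ⟨hg, -⟩ | ⟨hs, -⟩
      · exact G.loopless.irrefl x hg
      · rw [hmem] at hs; omega
    refine ⟨⟨fun x y => Xor' (G.Adj x y) (s(x, y) ∈ S), ⟨fun _ _ h => hsym h⟩, ⟨hirr⟩⟩,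
      fun x y => Iff.rfl, ?_, ?_⟩
    · -- evenness of degrees
      intro w
      set H : SimpleGraph ℕ := ⟨fun x y => Xor' (G.Adj x y) (s(x, y) ∈ S), ⟨fun _ _ h => hsym h⟩, ⟨hirr⟩⟩
      have hNH : H.neighborSet w = symmDiff (G.neighborSet w) {x | s(w, x) ∈ S} := by
        ext x
        simp only [SimpleGraph.mem_neighborSet, Set.mem_symmDiff, Set.mem_setOf_eq]
        show Xor' (G.Adj w x) (s(w, x) ∈ S) ↔ _
        unfold Xor' Xor
        tauto
      have hTfin : ({x | s(w, x) ∈ S} : Set ℕ).Finite := by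
        apply Set.Finite.subset (Set.finite_Icc 0 (u + l))
        intro x hx
        simp only [Set.mem_setOf_eq, hmem] at hx
        simp only [Set.mem_Icc]
        omega
      have hGfin : (G.neighborSet w).Finite := by
        apply Set.Finite.subset (Set.finite_Icc 0 n)
        intro x hx
        have := hsupp w x hx
        simp only [Set.mem_Icc]
        omega
      have hTeven : Even ({x | s(w, x) ∈ S} : Set ℕ).ncard := by
        by_cases hw : w = u ∨ w = b ∨ w = v
        · have h2 : ({x | s(w, x) ∈ S} : Set ℕ).ncard = 2 := by
            rcases hw with hw | hw | hw
            · have : ({x | s(w, x) ∈ S} : Set ℕ) = {b, v} := by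
                ext x; simp only [Set.mem_setOf_eq, hmem, Set.mem_insert_iff,
                  Set.mem_singleton_iff]; omega
              rw [this, Set.ncard_pair (by omega)]
            · have : ({x | s(w, x) ∈ S} : Set ℕ) = {u, v} := by
                ext x; simp only [Set.mem_setOf_eq, hmem, Set.mem_insert_iff,
                  Set.mem_singleton_iff]; omega
              rw [this, Set.ncard_pair (by omega)]
            · have : ({x | s(w, x) ∈ S} : Set ℕ) = {u, b} := by
                ext x; simp only [Set.mem_setOf_eq, hmem, Set.mem_insert_iff,
                  Set.mem_singleton_iff]; omega
              rw [this, Set.ncard_pair (by omega)]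
          rw [h2]; exact even_two
        · have : ({x | s(w, x) ∈ S} : Set ℕ) = ∅ := by
            ext x; simp only [Set.mem_setOf_eq, hmem, Set.mem_empty_iff_false, iff_false]
            omega
          rw [this, Set.ncard_empty]; exact Even.zero
      rw [hNH]
      exact even_ncard_symmDiff hGfin hTfin (heven w) hTeven
    · -- the count decreases
      right
      set H : SimpleGraph ℕ := ⟨fun x y => Xor' (G.Adj x y) (s(x, y) ∈ S), ⟨fun _ _ h => hsym h⟩, ⟨hirr⟩⟩
      have hlen : ∀ x y, s(x, y) ∈ S → max x y - min x y ≤ l := by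
        intro x y hs
        rw [hmem] at hs
        rcases hs with ⟨rfl, rfl⟩ | ⟨rfl, rfl⟩ | ⟨rfl, rfl⟩ | ⟨rfl, rfl⟩ | ⟨rfl, rfl⟩ |
          ⟨rfl, rfl⟩ <;> omega
      have hHadj : ∀ x y, H.Adj x y ↔ Xor' (G.Adj x y) (s(x, y) ∈ S) := fun _ _ => Iff.rfl
      constructor
      · intro x y hxy
        rw [hHadj] at hxy
        rcases hxy with ⟨hg, -⟩ | ⟨hs, -⟩
        · exact hmaxlen x y hg
        · exact hlen x y hs
      · have hGfin : ({p : ℕ × ℕ | p.1 < p.2 ∧ G.Adj p.1 p.2 ∧ p.2 - p.1 = l}).Finite := by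
          apply Set.Finite.subset (Set.finite_Icc (0, 0) (n, n))
          rintro ⟨x, y⟩ ⟨-, hg, -⟩
          have := hsupp x y hg
          simp only [Set.mem_Icc, Prod.mk_le_mk]
          omega
        apply Set.ncard_lt_ncard _ hGfin
        constructor
        · rintro ⟨x, y⟩ ⟨hxy, hadj, hlxy⟩
          rw [hHadj] at hadj
          rcases hadj with ⟨hg, -⟩ | ⟨hs, hng⟩
          · exact ⟨hxy, hg, hlxy⟩
          · exfalso
            rw [hmem] at hs
            rcases hs with ⟨h1, h2⟩ | ⟨h1, h2⟩ | ⟨h1, h2⟩ | ⟨h1, h2⟩ | ⟨h1, h2⟩ |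
              ⟨h1, h2⟩ <;> first | omega | exact hng (h1 ▸ h2 ▸ he)
        · intro hsub
          have huvG : ((u, v) : ℕ × ℕ) ∈ {p : ℕ × ℕ | p.1 < p.2 ∧ G.Adj p.1 p.2 ∧ p.2 - p.1 = l} :=
            ⟨huv, he, hl⟩
          have huvH := hsub huvG
          obtain ⟨-, hadj, -⟩ := huvH
          rw [hHadj] at hadj
          have huvS : s(u, v) ∈ S := by rw [hmem]; tauto
          rcases hadj with ⟨-, hns⟩ | ⟨-, hng⟩
          · exact hns huvS
          · exact hng he
end

section
/- If every vertex of a graph G on {1,...,n} has even degree and the maximal edge length of G is 2 with exactly one edge of length 2, then G is a triangle with edge lengths 1, 1, 2, i.e., G has vertex set support {u, u+1, u+2} with edges {u,u+1}, {u+1,u+2}, {u,u+2} for some u. -/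
/-- If every vertex of a graph `G` on `{1,…,n}` has even degree, `G` is nonempty,
the maximal edge length is 2, and exactly one edge has length 2, then `G` is a
triangle on `{u, u+1, u+2}` with edges `{u,u+1}, {u+1,u+2}, {u,u+2}`. -/
theorem stmt19 (n : ℕ) (G : SimpleGraph ℕ)
    (hsupp : ∀ a b, G.Adj a b → 1 ≤ a ∧ a ≤ n ∧ 1 ≤ b ∧ b ≤ n)
    (heven : ∀ v, Even ((G.neighborSet v).ncard))
    (hne : ∃ a b, G.Adj a b)
    (hmax : ∀ a b, G.Adj a b → max a b - min a b ≤ 2)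
    (honce : Set.ncard {p : ℕ × ℕ | p.1 < p.2 ∧ G.Adj p.1 p.2 ∧ p.2 - p.1 = 2} = 1) :
    ∃ u, ∀ x y, G.Adj x y ↔
      s(x, y) ∈ ({s(u, u + 1), s(u + 1, u + 2), s(u, u + 2)} : Set (Sym2 ℕ)) := by
  obtain ⟨p, hp⟩ := Set.ncard_eq_one.mp honce
  have hpmem : p ∈ {p : ℕ × ℕ | p.1 < p.2 ∧ G.Adj p.1 p.2 ∧ p.2 - p.1 = 2} := by
    rw [hp]; exact rfl
  obtain ⟨hplt, hpadj, hpd⟩ := hpmem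
  set u := p.1 with hu
  have hp2 : p.2 = u + 2 := by omega
  have hadju2 : G.Adj u (u + 2) := hp2 ▸ hpadj
  have huniq : ∀ a b, a < b → G.Adj a b → b - a = 2 → a = u ∧ b = u + 2 := by
    intro a b h1 h2 h3
    have : (a, b) ∈ ({p} : Set (ℕ × ℕ)) := by
      rw [← hp]; exact ⟨h1, h2, h3⟩
    have := Set.mem_singleton_iff.mp this
    constructor
    · rw [hu, ← this]
    · rw [← hp2, ← this]
  have hedge : ∀ a b, a < b → G.Adj a b → b = a + 1 ∨ (a = u ∧ b = u + 2) := by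
    intro a b h1 h2
    have h3 := hmax a b h2
    rw [max_eq_right h1.le, min_eq_left h1.le] at h3
    rcases Nat.lt_or_ge (b - a) 2 with h | h
    · left; omega
    · right; exact huniq a b h1 h2 (by omega)
  -- helper: even nonempty subset of a pair is the pair
  have hpair : ∀ v x y z, x ≠ y → G.neighborSet v ⊆ {x, y} → G.Adj v z →
      G.neighborSet v = {x, y} := by
    intro v x y z hxy hsub hz
    have hfinxy : ({x, y} : Set ℕ).Finite := Set.Finite.insert x (Set.finite_singleton y)
    have hfin : (G.neighborSet v).Finite := hfinxy.subset hsub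
    have h2 : ({x, y} : Set ℕ).ncard = 2 := Set.ncard_pair hxy
    have hle : (G.neighborSet v).ncard ≤ 2 := h2 ▸ Set.ncard_le_ncard hsub hfinxy
    have hpos : 0 < (G.neighborSet v).ncard :=
      (Set.ncard_pos hfin).mpr ⟨z, hz⟩
    obtain ⟨k, hk⟩ := heven v
    have hcard : (G.neighborSet v).ncard = 2 := by omega
    exact Set.eq_of_subset_of_ncard_le hsub (by omega) hfinxy
  -- helper: nonempty even implies not subset of singleton
  have hsingle : ∀ v x z, G.Adj v z → ¬ (G.neighborSet v ⊆ {x}) := by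
    intro v x z hz hsub
    have hfin : (G.neighborSet v).Finite := (Set.finite_singleton x).subset hsub
    have hle : (G.neighborSet v).ncard ≤ 1 :=
      Set.ncard_singleton x ▸ Set.ncard_le_ncard hsub (Set.finite_singleton x)
    have hpos : 0 < (G.neighborSet v).ncard := (Set.ncard_pos hfin).mpr ⟨z, hz⟩
    obtain ⟨k, hk⟩ := heven v
    omega
  set V : Set ℕ := {v | ∃ w, G.Adj v w} with hV
  have hVne : V.Nonempty := by obtain ⟨a, b, h⟩ := hne; exact ⟨a, b, h⟩
  have hVbdd : BddAbove V := by
    refine ⟨n, fun v hv => ?_⟩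
    obtain ⟨w, hw⟩ := hv
    exact (hsupp v w hw).2.1
  -- minimum
  set m := sInf V with hm
  have hmmem : m ∈ V := Nat.sInf_mem hVne
  have hmle : ∀ v ∈ V, m ≤ v := fun v hv => Nat.sInf_le hv
  have hmu : m = u := by
    by_contra hne'
    obtain ⟨w0, hw0⟩ := hmmem
    refine hsingle m (m + 1) w0 hw0 (fun w hw => ?_)
    have hwV : w ∈ V := ⟨m, hw.symm⟩
    have h1 : m ≤ w := hmle w hwV
    have h2 : m ≠ w := G.ne_of_adj hw
    rcases hedge m w (by omega) hw with h | ⟨h, _⟩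
    · simp [h]
    · exact absurd h hne'
  have huV : u ∈ V := ⟨u + 2, hadju2⟩
  have huleall : ∀ v ∈ V, u ≤ v := hmu ▸ hmle
  have hNu : G.neighborSet u = {u + 1, u + 2} := by
    refine hpair u (u + 1) (u + 2) (u + 2) (by omega) (fun w hw => ?_) hadju2
    have hwV : w ∈ V := ⟨u, hw.symm⟩
    have h1 : u ≤ w := huleall w hwV
    have h2 : u ≠ w := G.ne_of_adj hw
    rcases hedge u w (by omega) hw with h | ⟨_, h⟩ <;> simp [h]
  have hadju1 : G.Adj u (u + 1) := by
    have : (u + 1) ∈ G.neighborSet u := by rw [hNu]; left; rfl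
    exact this
  -- maximum
  set M := sSup V with hM
  have hMmem : M ∈ V := Nat.sSup_mem hVne hVbdd
  have hMge : ∀ v ∈ V, v ≤ M := fun v hv => le_csSup hVbdd hv
  have hMu : M = u + 2 := by
    by_contra hne'
    obtain ⟨w0, hw0⟩ := hMmem
    refine hsingle M (M - 1) w0 hw0 (fun w hw => ?_)
    have hwV : w ∈ V := ⟨M, hw.symm⟩
    have h1 : w ≤ M := hMge w hwV
    have h2 : w ≠ M := (G.ne_of_adj hw).symm
    rcases hedge w M (by omega) (((G.mem_neighborSet _ _).mp hw).symm) with h | ⟨_, h⟩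
    · simp only [Set.mem_singleton_iff]; omega
    · exact absurd h hne'
  have hgeall : ∀ v ∈ V, v ≤ u + 2 := hMu ▸ hMge
  have hN2 : G.neighborSet (u + 2) = {u + 1, u} := by
    refine hpair (u + 2) (u + 1) u u (by omega) (fun w hw => ?_) hadju2.symm
    have hwV : w ∈ V := ⟨u + 2, hw.symm⟩
    have h1 : w ≤ u + 2 := hgeall w hwV
    have h2 : w ≠ u + 2 := (G.ne_of_adj hw).symm
    rcases hedge w (u + 2) (by omega) (((G.mem_neighborSet _ _).mp hw).symm) with h | ⟨h, _⟩ <;>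
      simp only [Set.mem_insert_iff, Set.mem_singleton_iff] <;> omega
  have hadj12 : G.Adj (u + 1) (u + 2) := by
    have : (u + 1) ∈ G.neighborSet (u + 2) := by rw [hN2]; left; rfl
    exact this.symm
  refine ⟨u, fun x y => ?_⟩
  constructor
  · intro hxy
    have hxV : x ∈ V := ⟨y, hxy⟩
    have hyV : y ∈ V := ⟨x, hxy.symm⟩
    have hx1 := huleall x hxV
    have hx2 := hgeall x hxV
    have hy1 := huleall y hyV
    have hy2 := hgeall y hyV
    have hneq := G.ne_of_adj hxy
    simp only [Set.mem_insert_iff, Set.mem_singleton_iff, Sym2.eq, Sym2.rel_iff',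
      Prod.mk.injEq, Prod.swap_prod_mk]
    rcases Nat.lt_or_ge x y with h | h
    · rcases hedge x y h hxy with h' | ⟨h1, h2⟩ <;> omega
    · have h' : y < x := by omega
      rcases hedge y x h' hxy.symm with h'' | ⟨h1, h2⟩ <;> omega
  · intro h
    simp only [Set.mem_insert_iff, Set.mem_singleton_iff, Sym2.eq, Sym2.rel_iff',
      Prod.mk.injEq, Prod.swap_prod_mk] at h
    rcases h with (⟨h1, h2⟩ | ⟨h1, h2⟩) | (⟨h1, h2⟩ | ⟨h1, h2⟩) | (⟨h1, h2⟩ | ⟨h1, h2⟩) <;>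
      subst h1 <;> subst h2 <;>
      first
        | exact hadju1 | exact hadju1.symm
        | exact hadj12 | exact hadj12.symm
        | exact hadju2 | exact hadju2.symm
end
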